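/- arXiv:math/0011264 — 2 statements merged into one kernel-verified Lean document; each statement's English description precedes it below -/
import Mathlib

section
/- Let A be a commutative associative algebra over a field 𝔽 of characteristic 0 and let D be a nonzero Lie subalgebra of the Lie algebra Der A of derivations of A. If A is D-simple, then the Lie algebra W(A) = A·D = {u d : u ∈ A, d ∈ D} (with the commutator bracket) is a simple Lie algebra. -/
/-!
Statement 0 (Jordan's theorem).  Let `A` be a commutative associative algebra over a field
`𝔽` of characteristic 0 and let `D` be a nonzero Lie subalgebra of the Lie algebra `Der A`
of derivations of `A`.  If `A` is `D`-simple, then the Lie algebra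
`W(A) = A·D = span {u • d : u ∈ A, d ∈ D}` (with the commutator bracket) is a simple
Lie algebra.
-/

section Aux

variable (F : Type*) {A : Type*} [Field F] [CharZero F] [CommRing A] [Algebra F A]

include F in
private lemma jordan_nsmul_cancel {n : ℕ} (hn : n ≠ 0) {x : A} (h : n • x = 0) : x = 0 := by
  have h2 : (n : F) • x = 0 := by rw [Nat.cast_smul_eq_nsmul]; exact h
  rcases smul_eq_zero.mp h2 with h3 | h3
  · exact absurd (Nat.cast_eq_zero.mp h3) hn
  · exact h3

private lemma jordan_key_step (d : Derivation F A A) (a : A) {m j : ℕ}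
    (h : a ^ (m+1) * (d a) ^ (j+1) = 0) : a ^ m * (d a) ^ (j+3) = 0 := by
  have h0 : d (a ^ (m+1) * (d a) ^ (j+1)) = 0 := by rw [h, map_zero]
  rw [Derivation.leibniz, Derivation.leibniz_pow, Derivation.leibniz_pow] at h0
  simp only [smul_eq_mul, Nat.add_sub_cancel, nsmul_eq_mul] at h0
  have h1 := congrArg (· * d a) h0
  simp only [add_mul, zero_mul] at h1
  push_cast at h1
  have h2 : (m+1 : ℕ) • (a ^ m * (d a) ^ (j+3)) = 0 := by
    rw [nsmul_eq_mul]
    push_cast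
    linear_combination h1 - ((j:A)+1) * (d (d a)) * h
  exact jordan_nsmul_cancel F (Nat.succ_ne_zero m) h2

private lemma jordan_pow_mul_dpow_zero (d : Derivation F A A) (a : A) :
    ∀ m j : ℕ, a ^ m * (d a) ^ (j+1) = 0 → (d a) ^ (j + 1 + 2*m) = 0 := by
  intro m
  induction m with
  | zero => intro j h; simpa using h
  | succ k ih =>
    intro j h
    have h3 := ih (j+2) (jordan_key_step F d a h)
    rw [show j+1+2*(k+1) = j+2+1+2*k from by omega]
    exact h3

private lemma jordan_isNilpotent_derivation (d : Derivation F A A) (a : A)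
    (h : IsNilpotent a) : IsNilpotent (d a) := by
  obtain ⟨n, hn⟩ := h
  cases n with
  | zero =>
    refine ⟨1, ?_⟩
    have h1 : (1 : A) = 0 := by simpa using hn
    calc (d a)^1 = d a * 1 := by ring
    _ = 0 := by rw [h1, mul_zero]
  | succ k =>
    have hbase : a ^ k * (d a) ^ 1 = 0 := by
      have h0 : d (a ^ (k+1)) = 0 := by rw [hn, map_zero]
      rw [Derivation.leibniz_pow] at h0
      simp only [smul_eq_mul, Nat.add_sub_cancel] at h0
      have h4 : (k+1 : ℕ) • (a ^ k * d a) = 0 := by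
        rw [nsmul_eq_mul]; push_cast; rw [← h0]; ring
      have := jordan_nsmul_cancel F (Nat.succ_ne_zero k) h4
      simpa [pow_one] using this
    exact ⟨0 + 1 + 2*k, jordan_pow_mul_dpow_zero F d a k 0 hbase⟩

end Aux

section Aux2

variable {F A : Type*} [Field F] [CharZero F] [CommRing A] [Algebra F A]

/-- `⁅μ, u • ν⁆ = μ u • ν + u • ⁅μ, ν⁆` for derivations. -/
private lemma jordan_lie_smul (μ ν : Derivation F A A) (u : A) :
    ⁅μ, u • ν⁆ = μ u • ν + u • ⁅μ, ν⁆ := by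
  ext x
  simp only [Derivation.commutator_apply, Derivation.smul_apply, Derivation.add_apply,
    smul_eq_mul, Derivation.leibniz]
  ring

private lemma jordan_lie_smul_smul (δ : Derivation F A A) (a b : A) :
    ⁅a • δ, b • δ⁆ = (a * δ b) • δ - (b * δ a) • δ := by
  ext x
  simp only [Derivation.commutator_apply, Derivation.smul_apply, Derivation.sub_apply,
    smul_eq_mul, Derivation.leibniz]
  ring

end Aux2

theorem jordan_simple_witt
    (F A : Type*) [Field F] [CharZero F] [CommRing A] [Algebra F A]
    (D : LieSubalgebra F (Derivation F A A)) (hD : D ≠ ⊥)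
    -- `A` is `D`-simple: no subspace `I ≠ ⊥, ⊤` with `A·I ⊆ I` and `D(I) ⊆ I`
    (hDsimple : ¬ ∃ I : Submodule F A, I ≠ ⊥ ∧ I ≠ ⊤ ∧
      (∀ u : A, ∀ a ∈ I, u * a ∈ I) ∧
      (∀ d ∈ D, ∀ a ∈ I, (d : Derivation F A A) a ∈ I))
    -- `W(A) = A·D`, a Lie subalgebra of `Der A`
    (W : LieSubalgebra F (Derivation F A A))
    (hW : W.toSubmodule =
      Submodule.span F {f : Derivation F A A | ∃ (u : A) (d : Derivation F A A), d ∈ D ∧ f = u • d}) :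
    LieAlgebra.IsSimple F W := by
  classical
  -- a nonzero element of D
  obtain ⟨d0, hd0D, hd0ne⟩ : ∃ x, x ∈ D ∧ x ≠ 0 := by
    by_contra h
    push_neg at h
    exact hD ((LieSubalgebra.eq_bot_iff D).mpr fun x hx => h x hx)
  have hAnt : Nontrivial A := by
    by_contra h
    rw [not_nontrivial_iff_subsingleton] at h
    exact hd0ne (by ext a; exact Subsingleton.elim _ _)
  -- D-simplicity as a dichotomy
  have hsimp : ∀ J : Submodule F A, (∀ u : A, ∀ a ∈ J, u * a ∈ J) →
      (∀ d ∈ D, ∀ a ∈ J, (d : Derivation F A A) a ∈ J) → J = ⊥ ∨ J = ⊤ := by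
    intro J h1 h2
    by_contra h
    push_neg at h
    exact hDsimple ⟨J, h.1, h.2, h1, h2⟩
  -- A is reduced
  have hred : ∀ x : A, x * x = 0 → x = 0 := by
    have hN := hsimp (Submodule.restrictScalars F (nilradical A))
      (fun u a ha => Ideal.mul_mem_left _ u ha)
      (fun d hd a ha => jordan_isNilpotent_derivation F d a (mem_nilradical.mp ha))
    rcases hN with hbb | htt
    · intro x hx
      have hx2 : x ∈ Submodule.restrictScalars F (nilradical A) :=
        mem_nilradical.mpr ⟨2, by rwa [pow_two]⟩
      rw [hbb] at hx2
      exact (Submodule.mem_bot F).mp hx2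
    · exfalso
      have h1 : (1:A) ∈ Submodule.restrictScalars F (nilradical A) := by
        rw [htt]; exact Submodule.mem_top
      obtain ⟨n, hn⟩ := mem_nilradical.mp h1
      rw [one_pow] at hn
      exact one_ne_zero hn
  -- A is a domain
  have hdom : ∀ x y : A, x * y = 0 → x = 0 ∨ y = 0 := by
    intro x y hxy
    by_cases hy : y = 0
    · exact Or.inr hy
    · left
      have hmem : ∀ z : A, z ∈ LinearMap.ker (LinearMap.mulRight F y) ↔ z * y = 0 := by
        intro z
        rw [LinearMap.mem_ker, LinearMap.mulRight_apply]
      have hJ := hsimp (LinearMap.ker (LinearMap.mulRight F y)) ?_ ?_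
      · rcases hJ with hbb | htt
        · have : x ∈ LinearMap.ker (LinearMap.mulRight F y) := (hmem x).mpr hxy
          rw [hbb] at this
          exact (Submodule.mem_bot F).mp this
        · exfalso
          have h1 : (1:A) ∈ LinearMap.ker (LinearMap.mulRight F y) := by
            rw [htt]; exact Submodule.mem_top
          rw [hmem, one_mul] at h1
          exact hy h1
      · intro u a ha
        rw [hmem] at ha ⊢
        rw [mul_assoc, ha, mul_zero]
      · intro d hd a ha
        rw [hmem] at ha ⊢
        have h0 : (d : Derivation F A A) (a * y) = 0 := by rw [ha, map_zero]
        rw [Derivation.leibniz, smul_eq_mul, smul_eq_mul] at h0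
        apply hred
        linear_combination (d a * y) * h0 - (d a * d y) * ha
  -- W-membership lemmas
  have hWD : ∀ d ∈ D, (d : Derivation F A A) ∈ W := by
    intro d hd
    rw [← LieSubalgebra.mem_toSubmodule, hW]
    exact Submodule.subset_span ⟨1, d, hd, (one_smul A d).symm⟩
  have hWsmul : ∀ (u : A) (f : Derivation F A A), f ∈ W → u • f ∈ W := by
    intro u f hf
    rw [← LieSubalgebra.mem_toSubmodule] at hf ⊢
    rw [hW] at hf ⊢
    refine Submodule.span_induction
      (p := fun g _ => u • g ∈ Submodule.span F
        {f : Derivation F A A | ∃ (u : A) (d : Derivation F A A), d ∈ D ∧ f = u • d})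
      ?_ ?_ ?_ ?_ hf
    · rintro g ⟨v, e, heD, rfl⟩
      exact Submodule.subset_span ⟨u * v, e, heD, (mul_smul u v e).symm⟩
    · beta_reduce; rw [smul_zero]; exact Submodule.zero_mem _
    · intro p q hp hq hp' hq'
      beta_reduce; rw [smul_add]; exact Submodule.add_mem _ hp' hq'
    · intro c p hp hp'
      beta_reduce; rw [smul_comm]; exact Submodule.smul_mem _ c hp'
  constructor
  · -- every ideal is ⊥ or ⊤
    intro I
    rcases eq_or_ne I ⊥ with hb | hb
    · exact Or.inl hb
    right
    -- the membership predicate for I, viewed inside `Derivation F A A`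
    let P : Derivation F A A → Prop := fun f => ∃ hf : f ∈ W, (⟨f, hf⟩ : W) ∈ I
    have hPmem : ∀ {f}, P f → f ∈ W := fun ⟨hf, _⟩ => hf
    have hPiff : ∀ x : W, (P x ↔ x ∈ I) := by
      intro x
      constructor
      · rintro ⟨hf, hI⟩
        have he : (⟨(x : Derivation F A A), hf⟩ : W) = x := Subtype.ext rfl
        rwa [he] at hI
      · intro hx
        refine ⟨x.2, ?_⟩
        have he : (⟨(x : Derivation F A A), x.2⟩ : W) = x := Subtype.ext rfl
        rwa [he]
    have hP0 : P 0 := by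
      refine ⟨W.zero_mem', ?_⟩
      have he : (⟨(0 : Derivation F A A), W.zero_mem'⟩ : W) = 0 := Subtype.ext rfl
      rw [he]; exact zero_mem I
    have hPadd : ∀ {f g}, P f → P g → P (f + g) := by
      rintro f g ⟨hf, hfI⟩ ⟨hg, hgI⟩
      have hx : ((⟨f, hf⟩ : W) + ⟨g, hg⟩) ∈ I := add_mem hfI hgI
      have hc : (((⟨f, hf⟩ : W) + ⟨g, hg⟩ : W) : Derivation F A A) = f + g := rfl
      rw [← hc]
      exact (hPiff _).mpr hx
    have hPsmulF : ∀ (c : F) {f}, P f → P (c • f) := by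
      rintro c f ⟨hf, hfI⟩
      have hx : (c • (⟨f, hf⟩ : W)) ∈ I := SMulMemClass.smul_mem c hfI
      have hc : ((c • (⟨f, hf⟩ : W) : W) : Derivation F A A) = c • f := rfl
      rw [← hc]
      exact (hPiff _).mpr hx
    have hPneg : ∀ {f}, P f → P (-f) := by
      intro f hf
      have := hPsmulF (-1 : F) hf
      rwa [neg_one_smul] at this
    have hPsub : ∀ {f g}, P f → P g → P (f - g) := by
      intro f g hf hg
      rw [sub_eq_add_neg]
      exact hPadd hf (hPneg hg)
    have hPlie : ∀ {g f}, g ∈ W → P f → P ⁅g, f⁆ := by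
      rintro g f hg ⟨hf, hfI⟩
      have hx : (⁅(⟨g, hg⟩ : W), (⟨f, hf⟩ : W)⁆) ∈ I := I.lie_mem hfI
      have hc : ((⁅(⟨g, hg⟩ : W), (⟨f, hf⟩ : W)⁆ : W) : Derivation F A A) = ⁅g, f⁆ := rfl
      rw [← hc]
      exact (hPiff _).mpr hx
    have hPlie2 : ∀ {f g}, P f → g ∈ W → P ⁅f, g⁆ := by
      intro f g hf hg
      rw [← lie_skew]
      exact hPneg (hPlie hg hf)
    have hPhalf : ∀ {f}, P (f + f) → P f := by
      intro f h
      have h2 := hPsmulF ((2:F)⁻¹) h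
      have he : ((2:F)⁻¹ • (f + f)) = f := by
        rw [← two_smul F f, smul_smul, inv_mul_cancel₀ (two_ne_zero), one_smul]
      rwa [he] at h2
    -- get a nonzero element δ of I
    obtain ⟨x0, hx0I, hx0ne⟩ : ∃ x : W, x ∈ I ∧ x ≠ 0 := by
      by_contra h
      push_neg at h
      exact hb ((LieSubmodule.eq_bot_iff I).mpr fun m hm => h m hm)
    set δ : Derivation F A A := (x0 : Derivation F A A) with hδ
    have hδP : P δ := (hPiff x0).mpr hx0I
    have hδne : δ ≠ 0 := fun h => hx0ne (Subtype.ext h)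
    obtain ⟨aδ, haδ⟩ : ∃ a, δ a ≠ 0 := by
      by_contra h
      push_neg at h
      exact hδne (by ext a; simp [h a])
    -- step 1 : δ(a) • δ ∈ I
    have hs2 : ∀ a : A, P ((δ a) • δ) := by
      intro a
      have h1 : ⁅δ, a • δ⁆ = (δ a) • δ := by
        rw [jordan_lie_smul, lie_self, smul_zero, add_zero]
      rw [← h1]
      exact hPlie2 hδP (hWsmul a δ (hPmem hδP))
    -- symmetrization : η(u) • μ + μ(u) • η ∈ I for η, μ ∈ I
    have hsym : ∀ {η μ : Derivation F A A}, P η → P μ → ∀ u : A,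
        P ((η u) • μ + (μ u) • η) := by
      intro η μ hη hμ u
      have key : (η u) • μ + (μ u) • η = ⁅μ, u • η⁆ + ⁅η, u • μ⁆ := by
        rw [jordan_lie_smul, jordan_lie_smul, ← lie_skew μ η, smul_neg]
        abel
      rw [key]
      exact hPadd (hPlie2 hμ (hWsmul u η (hPmem hη))) (hPlie2 hη (hWsmul u μ (hPmem hμ)))
    -- halving : w • δ ∈ I → (w * δ u) • δ ∈ I
    have hhalf : ∀ (w u : A), P (w • δ) → P ((w * δ u) • δ) := by
      intro w u hw
      have h2 := hsym hδP hw u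
      have he : (δ u) • (w • δ) + ((w • δ) u) • δ = (w * δ u) • δ + (w * δ u) • δ := by
        rw [Derivation.smul_apply, smul_eq_mul, smul_smul, mul_comm (δ u) w]
      rw [he] at h2
      exact hPhalf h2
    -- key step : w • δ ∈ I → (u * δ w) • δ ∈ I
    have hC : ∀ (w u : A), P (w • δ) → P ((u * δ w) • δ) := by
      intro w u hw
      have hbr : (u * δ w) • δ = ⁅u • δ, w • δ⁆ + (w * δ u) • δ := by
        rw [jordan_lie_smul_smul, sub_add_cancel]
      rw [hbr]
      exact hPadd (hPlie (hWsmul u δ (hPmem hδP)) hw) (hhalf w u hw)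
    -- find a₀ with δ(δ a₀) ≠ 0
    obtain ⟨a0, ha0⟩ : ∃ a, δ (δ a) ≠ 0 := by
      by_contra h
      push_neg at h
      apply haδ
      apply hred
      have h1 : δ (δ (aδ * aδ)) = 0 := h _
      simp only [Derivation.leibniz, smul_eq_mul, map_add, h aδ, mul_zero, zero_add] at h1
      have h2 : (2:ℕ) • (δ aδ * δ aδ) = 0 := by rw [two_smul]; exact h1
      exact jordan_nsmul_cancel F (two_ne_zero) h2
    -- the element η := δ(δ a₀) • δ satisfies A • η ⊆ I
    have hNη : ∀ v : A, P (v • ((δ (δ a0)) • δ)) := by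
      intro v
      rw [smul_smul]
      exact hC (δ a0) v (hs2 a0)
    have hηne : (δ (δ a0)) • δ ≠ 0 := by
      intro h
      have h1 : ((δ (δ a0)) • δ) aδ = 0 := by rw [h]; rfl
      rw [Derivation.smul_apply, smul_eq_mul] at h1
      rcases hdom _ _ h1 with h2 | h2
      · exact ha0 h2
      · exact haδ h2
    -- stability of N = {ν | A • ν ⊆ I} under bracketing with W
    have hNstab : ∀ (ν : Derivation F A A), (∀ v : A, P (v • ν)) →
        ∀ (μ : Derivation F A A), μ ∈ W → ∀ v : A, P (v • ⁅μ, ν⁆) := by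
      intro ν hν μ hμ v
      have he : v • ⁅μ, ν⁆ = ⁅μ, v • ν⁆ - (μ v) • ν := by
        rw [jordan_lie_smul]; abel
      rw [he]
      exact hPsub (hPlie hμ (hν v)) (hν (μ v))
    -- final absorption : ν ∈ N, μ ∈ W ⇒ ν(u) • μ ∈ I
    have hfinal : ∀ (ν : Derivation F A A), (∀ v : A, P (v • ν)) →
        ∀ (u : A) (μ : Derivation F A A), μ ∈ W → P ((ν u) • μ) := by
      intro ν hν u μ hμ
      have he : (ν u) • μ = ⁅ν, u • μ⁆ - u • ⁅ν, μ⁆ := by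
        rw [jordan_lie_smul]; abel
      have h1 : P ⁅ν, u • μ⁆ := by
        have hν1 : P ν := by have := hν 1; rwa [one_smul] at this
        exact hPlie2 hν1 (hWsmul u μ hμ)
      have h2 : P (u • ⁅ν, μ⁆) := by
        have he2 : u • ⁅ν, μ⁆ = -(u • ⁅μ, ν⁆) := by
          rw [← lie_skew μ ν, smul_neg, neg_neg]
        rw [he2]
        exact hPneg (hNstab ν hν μ hμ u)
      rw [he]
      exact hPsub h1 h2
    -- the D-stable ideal generated by images of elements of N
    set S2 : Set A := {a : A | ∃ ν : Derivation F A A,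
      (∀ v : A, P (v • ν)) ∧ ∃ u v : A, a = v * ν u} with hS2
    have hS2span := hsimp (Submodule.span F S2) ?_ ?_
    rotate_left
    · -- multiplicative stability
      intro u a ha
      refine Submodule.span_induction
        (p := fun a _ => u * a ∈ Submodule.span F S2) ?_ ?_ ?_ ?_ ha
      · rintro g ⟨ν, hν, w, v, rfl⟩
        exact Submodule.subset_span ⟨ν, hν, w, u * v, by ring⟩
      · beta_reduce; rw [mul_zero]; exact Submodule.zero_mem _
      · intro p q hp hq hp' hq'
        beta_reduce; rw [mul_add]; exact Submodule.add_mem _ hp' hq'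
      · intro c p hp hp'
        beta_reduce; rw [mul_smul_comm]; exact Submodule.smul_mem _ c hp'
    · -- D-stability
      intro d hd a ha
      refine Submodule.span_induction
        (p := fun a _ => (d : Derivation F A A) a ∈ Submodule.span F S2) ?_ ?_ ?_ ?_ ha
      · rintro g ⟨ν, hν, w, v, rfl⟩
        have he : d (v * ν w) = v * (⁅d, ν⁆ w) + v * ν (d w) + d v * ν w := by
          rw [Derivation.leibniz, smul_eq_mul, smul_eq_mul, Derivation.commutator_apply]
          ring
        beta_reduce; rw [he]
        refine Submodule.add_mem _ (Submodule.add_mem _ ?_ ?_) ?_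
        · exact Submodule.subset_span ⟨⁅d, ν⁆, hNstab ν hν d (hWD d hd), w, v, rfl⟩
        · exact Submodule.subset_span ⟨ν, hν, d w, v, rfl⟩
        · exact Submodule.subset_span ⟨ν, hν, w, d v, rfl⟩
      · beta_reduce; rw [map_zero]; exact Submodule.zero_mem _
      · intro p q hp hq hp' hq'
        beta_reduce; rw [map_add]; exact Submodule.add_mem _ hp' hq'
      · intro c p hp hp'
        beta_reduce; rw [Derivation.map_smul]; exact Submodule.smul_mem _ c hp'
    rcases hS2span with hbb | htt
    · -- impossible : S2 contains a nonzero element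
      exfalso
      have hx : ((δ (δ a0)) • δ) aδ ∈ Submodule.span F S2 := by
        refine Submodule.subset_span ⟨(δ (δ a0)) • δ, hNη, aδ, 1, ?_⟩
        rw [one_mul]
      rw [hbb] at hx
      have hx0 : ((δ (δ a0)) • δ) aδ = 0 := (Submodule.mem_bot F).mp hx
      rw [Derivation.smul_apply, smul_eq_mul] at hx0
      rcases hdom _ _ hx0 with h2 | h2
      · exact ha0 h2
      · exact haδ h2
    · -- conclude : I = ⊤
      have claim : ∀ a ∈ Submodule.span F S2,
          ∀ (μ : Derivation F A A), μ ∈ W → P (a • μ) := by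
        intro a ha μ hμ
        refine Submodule.span_induction (p := fun a _ => P (a • μ)) ?_ ?_ ?_ ?_ ha
        · rintro g ⟨ν, hν, w, v, rfl⟩
          have he : (v * ν w) • μ = (ν w) • (v • μ) := by
            rw [mul_comm, mul_smul]
          beta_reduce; rw [he]
          exact hfinal ν hν w (v • μ) (hWsmul v μ hμ)
        · beta_reduce; rw [zero_smul]; exact hP0
        · intro p q hp hq hp' hq'
          beta_reduce; rw [add_smul]; exact hPadd hp' hq'
        · intro c p hp hp'
          beta_reduce; rw [smul_assoc]; exact hPsmulF c hp'
      have h1S : (1:A) ∈ Submodule.span F S2 := by rw [htt]; exact Submodule.mem_top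
      rw [eq_top_iff]
      intro x _
      have hx : P ((1:A) • (x : Derivation F A A)) := claim 1 h1S x x.2
      rw [one_smul] at hx
      exact (hPiff x).mp hx
  · -- non-abelian
    intro habel
    obtain ⟨b, hbne⟩ : ∃ b, d0 b ≠ 0 := by
      by_contra h
      push_neg at h
      exact hd0ne (by ext a; simp [h a])
    have h1 : ⁅(⟨d0, hWD d0 hd0D⟩ : W), (⟨b • d0, hWsmul b d0 (hWD d0 hd0D)⟩ : W)⁆ = 0 :=
      trivial_lie_zero _ _ _ _
    have h2 : ⁅d0, b • d0⁆ = (0 : Derivation F A A) := by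
      exact congrArg (fun z : W => (z : Derivation F A A)) h1
    rw [jordan_lie_smul, lie_self, smul_zero, add_zero] at h2
    have h4 : ((d0 b) • d0) b = 0 := by rw [h2]; rfl
    rw [Derivation.smul_apply, smul_eq_mul] at h4
    exact hbne (hred _ h4)
end

section
/- The bracket [u,v]_I = ∂_1(u)∂_2(v) − ∂_2(u)∂_1(v) + u∂_1(v) − ∂_1(u)v makes A_2 into a Lie algebra over 𝔽 (it is bilinear, alternating, and satisfies the Jacobi identity), and the element x^{σ_1,0} (when σ_1 ∈ Γ) lies in the center of (A_2, [·,·]_I). -/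
noncomputable section

open scoped BigOperators
open scoped Classical

variable (F : Type*) [Field F] [CharZero F]

/-- `J = J_1 × ⋯ × J_n` as an additive submonoid of `ℕ^n`. -/
def Jpi (n : ℕ) (Jp : Fin n → AddSubmonoid ℕ) : AddSubmonoid (Fin n → ℕ) :=
  AddSubmonoid.pi Set.univ Jp

/-- The semigroup algebra `A` of `Γ × J` over `𝔽`, with basis `{x^{α,i}}` and
product `x^{α,i}·x^{β,j} = x^{α+β,i+j}`. -/
abbrev AG (n : ℕ) (Γ : AddSubgroup (Fin n → F)) (Jp : Fin n → AddSubmonoid ℕ) : Type _ :=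
  AddMonoidAlgebra F (Γ × Jpi n Jp)

lemma sub_single_mem {n : ℕ} {Jp : Fin n → AddSubmonoid ℕ}
    (hJ : ∀ p, Jp p = ⊥ ∨ Jp p = ⊤) (i : Jpi n Jp) (p : Fin n)
    (h : (i : Fin n → ℕ) p ≠ 0) : ((i : Fin n → ℕ) - Pi.single p 1) ∈ Jpi n Jp := by
  have key : ∀ q : Fin n, (i : Fin n → ℕ) q - (Pi.single p 1 : Fin n → ℕ) q ∈ Jp q := by
    intro q
    rcases hJ q with hq | hq
    · have hiq : (i : Fin n → ℕ) q ∈ Jp q := i.2 q (Set.mem_univ q)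
      rw [hq] at hiq
      simp only [AddSubmonoid.mem_bot] at hiq
      by_cases hpq : q = p
      · subst hpq; exact absurd hiq h
      · rw [hq, AddSubmonoid.mem_bot]
        simp [Pi.single_eq_of_ne hpq, hiq]
    · rw [hq]; trivial
  intro q _
  exact key q

/-- The derivation `∂_p` of `A`, `∂_p(x^{α,i}) = α_p x^{α,i} + i_p x^{α,i-1_[p]}`
(where a term whose exponent falls outside `Γ × J` is treated as `0`). -/
def ddG (n : ℕ) (Γ : AddSubgroup (Fin n → F)) (Jp : Fin n → AddSubmonoid ℕ)
    (hJ : ∀ p, Jp p = ⊥ ∨ Jp p = ⊤) (p : Fin n) : Module.End F (AG F n Γ Jp) :=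
  (AddMonoidAlgebra.coeffLinearEquiv F).symm.toLinearMap ∘ₗ
  (Finsupp.lsum F fun (g : Γ × Jpi n Jp) =>
    ((g.1 : Fin n → F) p) • Finsupp.lsingle g +
    (if h : (g.2 : Fin n → ℕ) p = 0 then 0 else
      (((g.2 : Fin n → ℕ) p : F)) • Finsupp.lsingle
        (g.1, ⟨(g.2 : Fin n → ℕ) - Pi.single p 1, sub_single_mem hJ g.2 p h⟩)))
  ∘ₗ (AddMonoidAlgebra.coeffLinearEquiv F).toLinearMap

section Aux

variable {n : ℕ} {Γ : AddSubgroup (Fin n → F)} {Jp : Fin n → AddSubmonoid ℕ}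
  (hJ : ∀ p, Jp p = ⊥ ∨ Jp p = ⊤)

lemma ddG_single (p : Fin n) (g : Γ × Jpi n Jp) (c : F) :
    ddG F n Γ Jp hJ p (AddMonoidAlgebra.single g c) =
      ((g.1 : Fin n → F) p) • AddMonoidAlgebra.single g c +
      (if h : (g.2 : Fin n → ℕ) p = 0 then 0 else
        (((g.2 : Fin n → ℕ) p : F)) • AddMonoidAlgebra.single
          (g.1, ⟨(g.2 : Fin n → ℕ) - Pi.single p 1, sub_single_mem hJ g.2 p h⟩) c) := by
  apply (AddMonoidAlgebra.coeffLinearEquiv F).injective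
  rw [ddG]
  split_ifs with h <;> simp [AddMonoidAlgebra.coeff_single, Finsupp.lsum_single, h]

lemma sub_add_single {i j : Fin n → ℕ} (p : Fin n) (h : i p ≠ 0) :
    (i + j) - Pi.single p 1 = (i - Pi.single p 1) + j := by
  funext q
  by_cases hq : q = p
  · subst hq; simp only [Pi.add_apply, Pi.sub_apply, Pi.single_eq_same]; omega
  · simp [Pi.single_eq_of_ne hq]

set_option linter.unusedSectionVars false in
set_option maxHeartbeats 1000000 in
lemma ddG_mul (p : Fin n) (u v : AG F n Γ Jp) :
    ddG F n Γ Jp hJ p (u * v) = ddG F n Γ Jp hJ p u * v + u * ddG F n Γ Jp hJ p v := by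
  induction u using AddMonoidAlgebra.induction_linear with
  | zero => simp
  | add f g hf hg => simp only [add_mul, map_add, hf, hg]; ring
  | single a b =>
  induction v using AddMonoidAlgebra.induction_linear with
  | zero => simp
  | add f g hf hg => simp only [mul_add, map_add, hf, hg]; ring
  | single c d =>
  rw [AddMonoidAlgebra.single_mul_single, ddG_single, ddG_single, ddG_single]
  by_cases h1 : (a.2 : Fin n → ℕ) p = 0 <;> by_cases h2 : (c.2 : Fin n → ℕ) p = 0
  · have hac : (((a + c).2 : Fin n → ℕ)) p = 0 := by
      show (a.2 : Fin n → ℕ) p + (c.2 : Fin n → ℕ) p = 0; omega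
    rw [dif_pos hac, dif_pos h1, dif_pos h2]
    simp only [add_zero, AddMonoidAlgebra.single_mul_single,
      smul_mul_assoc, mul_smul_comm, Prod.fst_add]
    rw [AddSubgroup.coe_add, Pi.add_apply, add_smul]
  · -- h1 : a2 p = 0, h2 : c2 p ≠ 0
    have hac : ¬(((a + c).2 : Fin n → ℕ)) p = 0 := by
      show ¬((a.2 : Fin n → ℕ) p + (c.2 : Fin n → ℕ) p = 0); omega
    rw [dif_neg hac, dif_pos h1, dif_neg h2]
    have hexp : (a + (c.1, ⟨(c.2 : Fin n → ℕ) - Pi.single p 1, sub_single_mem hJ c.2 p h2⟩)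
        : Γ × Jpi n Jp)
        = ((a+c).1, ⟨((a+c).2 : Fin n → ℕ) - Pi.single p 1, sub_single_mem hJ (a+c).2 p hac⟩) := by
      refine Prod.ext rfl (Subtype.ext ?_)
      show (a.2 : Fin n → ℕ) + ((c.2 : Fin n → ℕ) - Pi.single p 1)
        = ((a.2 : Fin n → ℕ) + (c.2 : Fin n → ℕ)) - Pi.single p 1
      funext q; by_cases hq : q = p
      · subst hq; simp only [Pi.add_apply, Pi.sub_apply, Pi.single_eq_same]; omega
      · simp [Pi.single_eq_of_ne hq]
    have hs : (((((a+c).2 : Jpi n Jp) : Fin n → ℕ)) p : F) = (((c.2 : Fin n → ℕ)) p : F) := by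
      show ((((a.2 : Fin n → ℕ) p + (c.2 : Fin n → ℕ) p : ℕ)) : F) = _
      rw [h1]; push_cast; ring
    simp only [add_zero, mul_add, add_mul, AddMonoidAlgebra.single_mul_single, smul_mul_assoc, mul_smul_comm,
      Prod.fst_add, AddSubgroup.coe_add, Pi.add_apply, add_smul, hexp, hs]
    abel
  · -- h1 : a2 p ≠ 0, h2 : c2 p = 0
    have hac : ¬(((a + c).2 : Fin n → ℕ)) p = 0 := by
      show ¬((a.2 : Fin n → ℕ) p + (c.2 : Fin n → ℕ) p = 0); omega
    rw [dif_neg hac, dif_neg h1, dif_pos h2]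
    have hexp : ((a.1, ⟨(a.2 : Fin n → ℕ) - Pi.single p 1, sub_single_mem hJ a.2 p h1⟩) + c
        : Γ × Jpi n Jp)
        = ((a+c).1, ⟨((a+c).2 : Fin n → ℕ) - Pi.single p 1, sub_single_mem hJ (a+c).2 p hac⟩) := by
      refine Prod.ext rfl (Subtype.ext ?_)
      show ((a.2 : Fin n → ℕ) - Pi.single p 1) + (c.2 : Fin n → ℕ)
        = ((a.2 : Fin n → ℕ) + (c.2 : Fin n → ℕ)) - Pi.single p 1
      rw [sub_add_single p h1]
    have hs : (((((a+c).2 : Jpi n Jp) : Fin n → ℕ)) p : F) = (((a.2 : Fin n → ℕ)) p : F) := by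
      show ((((a.2 : Fin n → ℕ) p + (c.2 : Fin n → ℕ) p : ℕ)) : F) = _
      rw [h2]; push_cast; ring
    simp only [add_zero, mul_add, add_mul, AddMonoidAlgebra.single_mul_single, smul_mul_assoc, mul_smul_comm,
      Prod.fst_add, AddSubgroup.coe_add, Pi.add_apply, add_smul, hexp, hs]
    abel
  · -- both nonzero
    have hac : ¬(((a + c).2 : Fin n → ℕ)) p = 0 := by
      show ¬((a.2 : Fin n → ℕ) p + (c.2 : Fin n → ℕ) p = 0); omega
    rw [dif_neg hac, dif_neg h1, dif_neg h2]
    have hexp1 : ((a.1, ⟨(a.2 : Fin n → ℕ) - Pi.single p 1, sub_single_mem hJ a.2 p h1⟩) + c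
        : Γ × Jpi n Jp)
        = ((a+c).1, ⟨((a+c).2 : Fin n → ℕ) - Pi.single p 1, sub_single_mem hJ (a+c).2 p hac⟩) := by
      refine Prod.ext rfl (Subtype.ext ?_)
      show ((a.2 : Fin n → ℕ) - Pi.single p 1) + (c.2 : Fin n → ℕ)
        = ((a.2 : Fin n → ℕ) + (c.2 : Fin n → ℕ)) - Pi.single p 1
      rw [sub_add_single p h1]
    have hexp2 : (a + (c.1, ⟨(c.2 : Fin n → ℕ) - Pi.single p 1, sub_single_mem hJ c.2 p h2⟩)
        : Γ × Jpi n Jp)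
        = ((a+c).1, ⟨((a+c).2 : Fin n → ℕ) - Pi.single p 1, sub_single_mem hJ (a+c).2 p hac⟩) := by
      refine Prod.ext rfl (Subtype.ext ?_)
      show (a.2 : Fin n → ℕ) + ((c.2 : Fin n → ℕ) - Pi.single p 1)
        = ((a.2 : Fin n → ℕ) + (c.2 : Fin n → ℕ)) - Pi.single p 1
      funext q; by_cases hq : q = p
      · subst hq; simp only [Pi.add_apply, Pi.sub_apply, Pi.single_eq_same]; omega
      · simp [Pi.single_eq_of_ne hq]
    have hs : (((((a+c).2 : Jpi n Jp) : Fin n → ℕ)) p : F)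
        = (((a.2 : Fin n → ℕ)) p : F) + (((c.2 : Fin n → ℕ)) p : F) := by
      show ((((a.2 : Fin n → ℕ) p + (c.2 : Fin n → ℕ) p : ℕ)) : F) = _
      push_cast; ring
    simp only [mul_add, add_mul, AddMonoidAlgebra.single_mul_single, smul_mul_assoc, mul_smul_comm,
      Prod.fst_add, AddSubgroup.coe_add, Pi.add_apply, add_smul, hexp1, hexp2, hs]
    abel

lemma sub_single_mem' (hJ : ∀ p, Jp p = ⊥ ∨ Jp p = ⊤) (i : Jpi n Jp) (p : Fin n) :
    ((i : Fin n → ℕ) - Pi.single p 1) ∈ Jpi n Jp := by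
  by_cases h : (i : Fin n → ℕ) p = 0
  · have he : (i : Fin n → ℕ) - Pi.single p 1 = (i : Fin n → ℕ) := by
      funext q; by_cases hq : q = p
      · subst hq; simp only [Pi.sub_apply, Pi.single_eq_same]; omega
      · simp [Pi.single_eq_of_ne hq]
    rw [he]; exact i.2
  · exact sub_single_mem hJ i p h

set_option linter.unusedSectionVars false in
lemma ddG_single' (p : Fin n) (g : Γ × Jpi n Jp) (c : F) :
    ddG F n Γ Jp hJ p (AddMonoidAlgebra.single g c) =
      ((g.1 : Fin n → F) p) • AddMonoidAlgebra.single g c +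
      (((g.2 : Fin n → ℕ) p : F)) • AddMonoidAlgebra.single
          (g.1, ⟨(g.2 : Fin n → ℕ) - Pi.single p 1, sub_single_mem' hJ g.2 p⟩) c := by
  rw [ddG_single]
  split_ifs with h
  · rw [h]; simp
  · rfl

set_option linter.unusedSectionVars false in
lemma ddG_comm (p q : Fin n) (u : AG F n Γ Jp) :
    ddG F n Γ Jp hJ p (ddG F n Γ Jp hJ q u) = ddG F n Γ Jp hJ q (ddG F n Γ Jp hJ p u) := by
  by_cases hpq : p = q
  · rw [hpq]
  · induction u using AddMonoidAlgebra.induction_linear with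
    | zero => simp
    | add f g hf hg => simp only [map_add, hf, hg]
    | single a b =>
      rw [ddG_single' F hJ, ddG_single' F hJ, map_add, map_add, map_smul, map_smul,
        map_smul, map_smul, ddG_single' F hJ, ddG_single' F hJ, ddG_single' F hJ,
        ddG_single' F hJ]
      have hsub2 : ((a.2 : Fin n → ℕ) - Pi.single q 1) - Pi.single p 1
          = ((a.2 : Fin n → ℕ) - Pi.single p 1) - Pi.single q 1 := by
        funext r; simp only [Pi.sub_apply]; omega
      have h1 : (Pi.single q 1 : Fin n → ℕ) p = 0 := Pi.single_eq_of_ne hpq 1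
      have h2 : (Pi.single p 1 : Fin n → ℕ) q = 0 := Pi.single_eq_of_ne (Ne.symm hpq) 1
      simp only [smul_add, smul_smul]
      simp [Pi.sub_apply, h1, h2, hsub2, mul_comm]
      ring


end Aux

/-- The basis monomial `x^{v,0}`, with the convention that it is `0` if `v ∉ Γ`. -/
def xIf (n : ℕ) (Γ : AddSubgroup (Fin n → F)) (Jp : Fin n → AddSubmonoid ℕ)
    (v : Fin n → F) : AG F n Γ Jp :=
  if h : v ∈ Γ then AddMonoidAlgebra.single ((⟨v, h⟩ : Γ), (0 : Jpi n Jp)) 1 else 0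

/-- The bracket `[u,v]_I = ∂_1(u)∂_2(v) − ∂_2(u)∂_1(v) + u∂_1(v) − ∂_1(u)v` on `A_2`. -/
def brI (Γ : AddSubgroup (Fin 2 → F)) (Jp : Fin 2 → AddSubmonoid ℕ)
    (hJ : ∀ p, Jp p = ⊥ ∨ Jp p = ⊤) (u v : AG F 2 Γ Jp) : AG F 2 Γ Jp :=
  ddG F 2 Γ Jp hJ 0 u * ddG F 2 Γ Jp hJ 1 v - ddG F 2 Γ Jp hJ 1 u * ddG F 2 Γ Jp hJ 0 v
    + u * ddG F 2 Γ Jp hJ 0 v - ddG F 2 Γ Jp hJ 0 u * v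

set_option maxHeartbeats 2000000 in
/-- `[·,·]_I` makes `A_2` a Lie algebra over `𝔽` (it is bilinear,
alternating and satisfies the Jacobi identity), and `x^{σ_1,0}` (when `σ_1 = (0,1) ∈ Γ`)
lies in the center of `(A_2, [·,·]_I)`. -/
theorem brI_lie_and_central (Γ : AddSubgroup (Fin 2 → F)) (Jp : Fin 2 → AddSubmonoid ℕ)
    (hJ : ∀ p, Jp p = ⊥ ∨ Jp p = ⊤)
    (hne : ∀ p : Fin 2, (∃ α ∈ Γ, α p ≠ 0) ∨ Jp p ≠ ⊥) :
    (∀ u v w : AG F 2 Γ Jp, brI F Γ Jp hJ (u + v) w = brI F Γ Jp hJ u w + brI F Γ Jp hJ v w) ∧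
    (∀ (c : F) (u v : AG F 2 Γ Jp), brI F Γ Jp hJ (c • u) v = c • brI F Γ Jp hJ u v) ∧
    (∀ u v w : AG F 2 Γ Jp, brI F Γ Jp hJ u (v + w) = brI F Γ Jp hJ u v + brI F Γ Jp hJ u w) ∧
    (∀ (c : F) (u v : AG F 2 Γ Jp), brI F Γ Jp hJ u (c • v) = c • brI F Γ Jp hJ u v) ∧
    (∀ u : AG F 2 Γ Jp, brI F Γ Jp hJ u u = 0) ∧
    (∀ u v w : AG F 2 Γ Jp,
      brI F Γ Jp hJ u (brI F Γ Jp hJ v w) + brI F Γ Jp hJ v (brI F Γ Jp hJ w u)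
        + brI F Γ Jp hJ w (brI F Γ Jp hJ u v) = 0) ∧
    (∀ _h : (![0, 1] : Fin 2 → F) ∈ Γ, ∀ u : AG F 2 Γ Jp,
      brI F Γ Jp hJ (xIf F 2 Γ Jp ![0, 1]) u = 0) := by
  refine ⟨?_, ?_, ?_, ?_, ?_, ?_, ?_⟩
  · intro u v w; simp only [brI, map_add]; ring
  · intro c u v
    simp only [brI, map_smul, smul_mul_assoc, mul_smul_comm, smul_sub, smul_add]
  · intro u v w; simp only [brI, map_add]; ring
  · intro c u v
    simp only [brI, map_smul, smul_mul_assoc, mul_smul_comm, smul_sub, smul_add]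
  · intro u; simp only [brI]; ring
  · intro u v w
    simp only [brI, map_sub, map_add, ddG_mul F hJ, ddG_comm F hJ 1 0]
    ring
  · intro h u
    have hx : xIf F 2 Γ Jp ![0, 1] = AddMonoidAlgebra.single ((⟨![0,1], h⟩ : Γ), (0 : Jpi 2 Jp)) 1 := by
      rw [xIf, dif_pos h]
    have hz : ∀ p : Fin 2, (((0 : Jpi 2 Jp) : Fin 2 → ℕ)) p = 0 := fun p => rfl
    have hd0 : ddG F 2 Γ Jp hJ 0 (xIf F 2 Γ Jp ![0, 1]) = 0 := by
      rw [hx, ddG_single F hJ, dif_pos (hz 0)]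
      show ((![0, 1] : Fin 2 → F) 0) • _ + 0 = 0
      simp
    have hd1 : ddG F 2 Γ Jp hJ 1 (xIf F 2 Γ Jp ![0, 1]) = xIf F 2 Γ Jp ![0, 1] := by
      rw [hx, ddG_single F hJ, dif_pos (hz 1)]
      show ((![0, 1] : Fin 2 → F) 1) • _ + 0 = _
      simp
    rw [brI, hd0, hd1]
    ring
end
end
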